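/- arXiv:2203.16935 — 4 statements merged into one kernel-verified Lean document; each statement's English description precedes it below -/
import Mathlib

section
/- Let X be a random vector in ℝⁿ supported in the ball B(c_Y, r_Y) whose density p satisfies p(x) ≤ A / V_n(B(c_Y, r_Y)) for some constant A > 0. Then for any fixed unit vector u ∈ ℝⁿ and any δ ∈ (0,1), the probability that |⟨u, X − c_Y⟩| > δ r_Y is at most 2A(1 − δ²)^{n/2}. -/
open MeasureTheory
open scoped RealInnerProductSpace ENNReal

private lemma slab_aux {n : ℕ} (a u : EuclideanSpace ℝ (Fin n)) (hu : ‖u‖ = 1)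
    (rY δ t : ℝ) (hr : 0 < rY) (hδ : 0 < δ) (hδ1 : δ < 1) (ha : ‖a‖ ≤ rY)
    (ht2 : t ^ 2 = (δ * rY) ^ 2) (hin : δ * rY * (δ * rY) ≤ t * ⟪u, a⟫) :
    ‖a - t • u‖ ^ 2 ≤ (rY * Real.sqrt (1 - δ ^ 2)) ^ 2 := by
  have hsq : Real.sqrt (1 - δ ^ 2) ^ 2 = 1 - δ ^ 2 := Real.sq_sqrt (by nlinarith)
  have hexp : ‖a - t • u‖ ^ 2 = ‖a‖ ^ 2 - 2 * (t * ⟪u, a⟫) + t ^ 2 := by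
    rw [norm_sub_sq_real, real_inner_smul_right, real_inner_comm, norm_smul]
    simp [hu, Real.norm_eq_abs, sq_abs]
  rw [mul_pow, hsq]
  nlinarith [norm_nonneg a, sq_nonneg (‖a‖)]

theorem slab_probability_bound (n : ℕ) (cY : EuclideanSpace ℝ (Fin n))
    (rY A : ℝ) (hr : 0 < rY) (hA : 0 < A)
    (p : EuclideanSpace ℝ (Fin n) → ℝ≥0∞)
    (μ : Measure (EuclideanSpace ℝ (Fin n)))
    (hμ : μ = volume.withDensity p) [IsProbabilityMeasure μ]
    (hsupp : ∀ x, x ∉ Metric.closedBall cY rY → p x = 0)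
    (hbound : ∀ x, p x ≤ ENNReal.ofReal A / volume (Metric.closedBall cY rY))
    (u : EuclideanSpace ℝ (Fin n)) (hu : ‖u‖ = 1)
    (δ : ℝ) (hδ : δ ∈ Set.Ioo (0 : ℝ) 1) :
    μ {x | |⟪u, x - cY⟫| > δ * rY}
      ≤ ENNReal.ofReal (2 * A * Real.sqrt (1 - δ ^ 2) ^ n) := by
  obtain ⟨hδ0, hδ1⟩ := hδ
  set s : ℝ := Real.sqrt (1 - δ ^ 2) with hs_def
  have hs0 : 0 ≤ s := Real.sqrt_nonneg _
  have hs2 : s ^ 2 = 1 - δ ^ 2 := Real.sq_sqrt (by nlinarith)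
  set S : Set (EuclideanSpace ℝ (Fin n)) := {x | |⟪u, x - cY⟫| > δ * rY} with hS_def
  set B := Metric.closedBall cY rY with hB_def
  set V := volume B with hV_def
  have hfc : Continuous fun x : EuclideanSpace ℝ (Fin n) => |⟪u, x - cY⟫| :=
    (continuous_const.inner (continuous_id.sub continuous_const)).abs
  have hS : MeasurableSet S := measurableSet_lt measurable_const hfc.measurable
  have hSB : MeasurableSet (S ∩ B) := hS.inter measurableSet_closedBall
  -- geometric containment
  have hcontain : S ∩ B ⊆ Metric.closedBall (cY + (δ * rY) • u) (rY * s) ∪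
      Metric.closedBall (cY - (δ * rY) • u) (rY * s) := by
    rintro x ⟨hxS, hxB⟩
    have hxB' : ‖x - cY‖ ≤ rY := by
      rw [← dist_eq_norm]; exact Metric.mem_closedBall.mp hxB
    have hxS' : δ * rY < |⟪u, x - cY⟫| := hxS
    rcases le_or_gt 0 (⟪u, x - cY⟫) with h | h
    · left
      rw [Metric.mem_closedBall, dist_eq_norm,
        show x - (cY + (δ * rY) • u) = x - cY - (δ * rY) • u by abel]
      have key := slab_aux (x - cY) u hu rY δ (δ * rY) hr hδ0 hδ1 hxB' rfl
        (by rw [abs_of_nonneg h] at hxS'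
            nlinarith [mul_pos hδ0 hr])
      have h1 : ‖x - cY - (δ * rY) • u‖ = Real.sqrt (‖x - cY - (δ * rY) • u‖ ^ 2) :=
        (Real.sqrt_sq (norm_nonneg _)).symm
      rw [h1]
      calc Real.sqrt (‖x - cY - (δ * rY) • u‖ ^ 2) ≤ Real.sqrt ((rY * s) ^ 2) :=
            Real.sqrt_le_sqrt key
        _ = rY * s := Real.sqrt_sq (by positivity)
    · right
      rw [Metric.mem_closedBall, dist_eq_norm,
        show x - (cY - (δ * rY) • u) = x - cY - (-(δ * rY)) • u by rw [neg_smul]; abel]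
      have key := slab_aux (x - cY) u hu rY δ (-(δ * rY)) hr hδ0 hδ1 hxB'
        (by ring)
        (by rw [abs_of_neg h] at hxS'
            nlinarith [mul_pos hδ0 hr])
      have h1 : ‖x - cY - -(δ * rY) • u‖ = Real.sqrt (‖x - cY - -(δ * rY) • u‖ ^ 2) :=
        (Real.sqrt_sq (norm_nonneg _)).symm
      rw [h1]
      calc Real.sqrt (‖x - cY - -(δ * rY) • u‖ ^ 2) ≤ Real.sqrt ((rY * s) ^ 2) :=
            Real.sqrt_le_sqrt key
        _ = rY * s := Real.sqrt_sq (by positivity)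
  -- volume of the two caps
  have hV0 : V ≠ 0 := (Metric.measure_closedBall_pos volume cY hr).ne'
  have hVt : V ≠ ⊤ := measure_closedBall_lt_top.ne
  have hball : ∀ c : EuclideanSpace ℝ (Fin n),
      volume (Metric.closedBall c (rY * s)) = ENNReal.ofReal (s ^ n) * V := by
    intro c
    rw [hV_def, hB_def,
      Measure.addHaar_closedBall volume c (by positivity : (0:ℝ) ≤ rY * s),
      Measure.addHaar_closedBall volume cY hr.le, finrank_euclideanSpace_fin,
      mul_pow, ENNReal.ofReal_mul (by positivity), ← mul_assoc,
      mul_comm (ENNReal.ofReal (rY ^ n)) (ENNReal.ofReal (s ^ n))]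
  have hvolSB : volume (S ∩ B) ≤ 2 * (ENNReal.ofReal (s ^ n) * V) := by
    calc volume (S ∩ B) ≤ volume (Metric.closedBall (cY + (δ * rY) • u) (rY * s) ∪
          Metric.closedBall (cY - (δ * rY) • u) (rY * s)) := measure_mono hcontain
      _ ≤ volume (Metric.closedBall (cY + (δ * rY) • u) (rY * s)) +
          volume (Metric.closedBall (cY - (δ * rY) • u) (rY * s)) := measure_union_le _ _
      _ = 2 * (ENNReal.ofReal (s ^ n) * V) := by rw [hball, hball, two_mul]
  -- bound the measure
  have h1 : μ S = ∫⁻ x in S, p x ∂volume := by rw [hμ, withDensity_apply _ hS]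
  have h2 : ∫⁻ x in S, p x ∂volume ≤ (ENNReal.ofReal A / V) * volume (S ∩ B) := by
    rw [← lintegral_indicator hS]
    calc ∫⁻ x, S.indicator p x ∂volume
        ≤ ∫⁻ x, (S ∩ B).indicator (fun _ => ENNReal.ofReal A / V) x ∂volume := by
          refine lintegral_mono fun x => ?_
          by_cases hx : x ∈ S
          · rw [Set.indicator_of_mem hx]
            by_cases hx' : x ∈ B
            · rw [Set.indicator_of_mem (Set.mem_inter hx hx')]
              exact hbound x
            · rw [hsupp x hx']; exact zero_le
          · rw [Set.indicator_of_notMem hx]; exact zero_le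
      _ = (ENNReal.ofReal A / V) * volume (S ∩ B) := lintegral_indicator_const hSB _
  calc μ S ≤ (ENNReal.ofReal A / V) * volume (S ∩ B) := h1 ▸ h2
    _ ≤ (ENNReal.ofReal A / V) * (2 * (ENNReal.ofReal (s ^ n) * V)) :=
        mul_le_mul_right hvolSB _
    _ = (ENNReal.ofReal A / V * V) * (2 * ENNReal.ofReal (s ^ n)) := by ring
    _ = ENNReal.ofReal A * (2 * ENNReal.ofReal (s ^ n)) := by
        rw [ENNReal.div_mul_cancel hV0 hVt]
    _ = ENNReal.ofReal (2 * A * s ^ n) := by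
        rw [ENNReal.ofReal_mul (by positivity), ENNReal.ofReal_mul (by norm_num)]
        simp only [ENNReal.ofReal_ofNat]
        ring
end

section
/- Let X be a random vector in ℝⁿ supported in B(0, r_X) with density p satisfying p(x) ≤ A_X / V_n(B(0, r_X)). Then for any unit vector w ∈ ℝⁿ and threshold θ ∈ (0, r_X), the probability that ⟨w, X⟩ > θ is at most A_X (1 − θ²/r_X²)^{n/2}. -/
open MeasureTheory
open scoped RealInnerProductSpace ENNReal

theorem false_positive_bound (n : ℕ) (rX AX : ℝ) (hr : 0 < rX) (hA : 0 < AX)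
    (p : EuclideanSpace ℝ (Fin n) → ℝ≥0∞)
    (μ : Measure (EuclideanSpace ℝ (Fin n)))
    (hμ : μ = volume.withDensity p) [IsProbabilityMeasure μ]
    (hsupp : ∀ x, x ∉ Metric.closedBall (0 : EuclideanSpace ℝ (Fin n)) rX → p x = 0)
    (hbound : ∀ x, p x ≤ ENNReal.ofReal AX /
        volume (Metric.closedBall (0 : EuclideanSpace ℝ (Fin n)) rX))
    (w : EuclideanSpace ℝ (Fin n)) (hw : ‖w‖ = 1)
    (θ : ℝ) (hθ : θ ∈ Set.Ioo 0 rX) :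
    μ {x | ⟪w, x⟫ > θ}
      ≤ ENNReal.ofReal (AX * Real.sqrt (1 - θ ^ 2 / rX ^ 2) ^ n) := by
  obtain ⟨hθ0, hθr⟩ := hθ
  set B : Set (EuclideanSpace ℝ (Fin n)) := Metric.closedBall 0 rX with hB
  set S : Set (EuclideanSpace ℝ (Fin n)) := {x | ⟪w, x⟫ > θ} with hSdef
  set ρ : ℝ := Real.sqrt (rX ^ 2 - θ ^ 2) with hρ
  have hρ0 : 0 ≤ ρ := Real.sqrt_nonneg _
  have hsub : rX ^ 2 - θ ^ 2 ≥ 0 := by nlinarith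
  have hρsq : ρ ^ 2 = rX ^ 2 - θ ^ 2 := Real.sq_sqrt hsub
  set B' : Set (EuclideanSpace ℝ (Fin n)) := Metric.closedBall (θ • w) ρ with hB'
  have hS : MeasurableSet S := by
    have : Continuous fun x : EuclideanSpace ℝ (Fin n) => ⟪w, x⟫ :=
      Continuous.inner continuous_const continuous_id
    exact measurableSet_lt measurable_const this.measurable
  set C : ℝ≥0∞ := ENNReal.ofReal AX / volume B with hC
  -- geometric containment
  have hcontain : B ∩ S ⊆ B' := by
    rintro x ⟨hxB, hxS⟩
    have hx : ‖x‖ ≤ rX := mem_closedBall_zero_iff.mp hxB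
    have hix : θ < ⟪w, x⟫ := hxS
    have hnsq : ‖x - θ • w‖ ^ 2 ≤ ρ ^ 2 := by
      have h1 : ‖x - θ • w‖ ^ 2 = ‖x‖ ^ 2 - 2 * ⟪x, θ • w⟫ + ‖θ • w‖ ^ 2 := by
        rw [@norm_sub_sq_real]
      have h2 : ⟪x, θ • w⟫ = θ * ⟪w, x⟫ := by
        rw [real_inner_smul_right, real_inner_comm]
      have h3 : ‖θ • w‖ = θ := by
        rw [norm_smul, hw, mul_one, Real.norm_eq_abs, abs_of_pos hθ0]
      rw [h1, h2, h3, hρsq]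
      nlinarith [norm_nonneg x, mul_lt_mul_of_pos_left hix hθ0,
        mul_le_mul hx hx (norm_nonneg x) hr.le]
    have hle : ‖x - θ • w‖ ≤ ρ := by
      have h4 := Real.sqrt_le_sqrt hnsq
      rwa [Real.sqrt_sq (norm_nonneg _), Real.sqrt_sq hρ0] at h4
    exact mem_closedBall_iff_norm.mpr hle
  have hBmeas : MeasurableSet B := measurableSet_closedBall
  -- volume facts
  have hV1pos : 0 < volume (Metric.ball (0 : EuclideanSpace ℝ (Fin n)) 1) :=
    Metric.measure_ball_pos _ _ one_pos
  have hV1top : volume (Metric.ball (0 : EuclideanSpace ℝ (Fin n)) 1) < ⊤ :=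
    measure_ball_lt_top
  set V1 := volume (Metric.ball (0 : EuclideanSpace ℝ (Fin n)) 1) with hV1
  have hrankn : Module.finrank ℝ (EuclideanSpace ℝ (Fin n)) = n := by simp
  have hvolB : volume B = ENNReal.ofReal (rX ^ n) * V1 := by
    rw [hB, Measure.addHaar_closedBall _ _ hr.le, hrankn]
  have hvolB' : volume B' = ENNReal.ofReal (ρ ^ n) * V1 := by
    rw [hB', Measure.addHaar_closedBall _ _ hρ0, hrankn]
  -- main chain
  have step1 : μ S = ∫⁻ x in S, p x ∂volume := by
    rw [hμ, withDensity_apply p hS]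
  have step2 : (∫⁻ x in S, p x ∂volume) ≤ ∫⁻ x in S, B.indicator (fun _ => C) x ∂volume := by
    refine lintegral_mono fun x => ?_
    by_cases hx : x ∈ B
    · rw [Set.indicator_of_mem hx]; exact hbound x
    · rw [Set.indicator_of_notMem hx, hsupp x hx]
  have step3 : (∫⁻ x in S, B.indicator (fun _ => C) x ∂volume) = C * volume (B ∩ S) := by
    rw [lintegral_indicator hBmeas, setLIntegral_const,
      Measure.restrict_apply hBmeas]
  have step4 : C * volume (B ∩ S) ≤ C * volume B' :=
    mul_le_mul_right (measure_mono hcontain) _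
  have step5 : C * volume B' = ENNReal.ofReal (AX * Real.sqrt (1 - θ ^ 2 / rX ^ 2) ^ n) := by
    rw [hC, hvolB, hvolB']
    have hre : ENNReal.ofReal AX / (ENNReal.ofReal (rX ^ n) * V1) * (ENNReal.ofReal (ρ ^ n) * V1)
        = ENNReal.ofReal AX * ENNReal.ofReal (ρ ^ n) * V1 / (ENNReal.ofReal (rX ^ n) * V1) := by
      rw [div_eq_mul_inv, div_eq_mul_inv]; ring
    rw [hre,
      ENNReal.mul_div_mul_right _ _ (ne_of_gt hV1pos) (ne_of_lt hV1top),
      ← ENNReal.ofReal_mul hA.le,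
      ← ENNReal.ofReal_div_of_pos (pow_pos hr n)]
    congr 1
    have hratio : Real.sqrt (1 - θ ^ 2 / rX ^ 2) = ρ / rX := by
      rw [show (1 - θ ^ 2 / rX ^ 2) = (rX ^ 2 - θ ^ 2) / rX ^ 2 by field_simp,
        Real.sqrt_div hsub, Real.sqrt_sq hr.le]
    rw [hratio, div_pow]
    ring
  calc μ S = ∫⁻ x in S, p x ∂volume := step1
    _ ≤ ∫⁻ x in S, B.indicator (fun _ => C) x ∂volume := step2
    _ = C * volume (B ∩ S) := step3
    _ ≤ C * volume B' := step4
    _ = _ := step5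
end

section
/- Let x₁, ..., x_k be i.i.d. random vectors in ℝⁿ supported in B(c_Y, r_Y) with density ≤ A_Y / V_n(B(c_Y, r_Y)), and let X be an independent random vector in ℝⁿ supported in B(0, r_X) with density ≤ A_X / V_n(B(0, r_X)). Let x̄ = (1/k)Σᵢ xᵢ, and define the classifier g(x) = 1 if (1/k)Σᵢ ⟨xᵢ, x⟩ ≥ θ‖x̄‖ and g(x) = 0 otherwise, for θ ∈ (0, r_X). Then P(g(X) = 1 | x̄ ≠ 0) ≤ A_X (1 − θ²/r_X²)^{n/2}. -/
open MeasureTheory ProbabilityTheory Metric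
open scoped RealInnerProductSpace ENNReal

lemma slice_bound (n : ℕ) (rX AX θ : ℝ) (hrX : 0 < rX) (hAX : 0 < AX)
    (hθ0 : 0 < θ) (hθr : θ < rX)
    (pX : EuclideanSpace ℝ (Fin n) → ℝ≥0∞)
    (hsuppX : ∀ x, x ∉ Metric.closedBall (0 : EuclideanSpace ℝ (Fin n)) rX → pX x = 0)
    (hboundX : ∀ x, pX x ≤ ENNReal.ofReal AX /
        volume (Metric.closedBall (0 : EuclideanSpace ℝ (Fin n)) rX))
    (v : EuclideanSpace ℝ (Fin n)) (hv : v ≠ 0) :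
    (volume.withDensity pX) {x | θ * ‖v‖ ≤ ⟪v, x⟫} ≤
      ENNReal.ofReal (AX * Real.sqrt (1 - θ ^ 2 / rX ^ 2) ^ n) := by
  have hvn : (0:ℝ) < ‖v‖ := norm_pos_iff.mpr hv
  set u : EuclideanSpace ℝ (Fin n) := ‖v‖⁻¹ • v with hu
  have hun : ‖u‖ = 1 := by
    rw [hu, norm_smul, norm_inv, norm_norm, inv_mul_cancel₀ hvn.ne']
  set S : Set (EuclideanSpace ℝ (Fin n)) := {x | θ * ‖v‖ ≤ ⟪v, x⟫} with hSdef
  have hScont : MeasurableSet S := by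
    apply measurableSet_le measurable_const
    exact (continuous_const.inner continuous_id).measurable
  set s : ℝ := Real.sqrt (rX ^ 2 - θ ^ 2) with hs
  have hs0 : 0 ≤ s := Real.sqrt_nonneg _
  -- the cap is inside a small ball
  have hcap : S ∩ closedBall (0:EuclideanSpace ℝ (Fin n)) rX ⊆ closedBall (θ • u) s := by
    rintro x ⟨hxS, hxB⟩
    have hxn : ‖x‖ ≤ rX := by simpa using hxB
    have hxS' : θ * ‖v‖ ≤ ⟪v, x⟫ := hxS
    have hinner : θ ≤ ⟪u, x⟫ := by
      have h : ⟪u, x⟫ = ‖v‖⁻¹ * ⟪v, x⟫ := real_inner_smul_left v x _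
      rw [h, le_inv_mul_iff₀ hvn, mul_comm]
      exact hxS'
    have key : ‖x - θ • u‖ ^ 2 ≤ s ^ 2 := by
      have h1 : ‖x - θ • u‖ ^ 2 = ‖x‖ ^ 2 - 2 * (θ * ⟪x, u⟫) + θ^2 := by
        rw [norm_sub_sq_real, norm_smul, real_inner_smul_right, hun]
        simp only [Real.norm_eq_abs, abs_of_pos hθ0, mul_one, one_pow]
      have h2 : ⟪x, u⟫ = ⟪u, x⟫ := real_inner_comm _ _
      have h3 : s ^ 2 = rX ^ 2 - θ ^ 2 := Real.sq_sqrt (by nlinarith)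
      have h4 : ‖x‖^2 ≤ rX^2 := by nlinarith [norm_nonneg x]
      rw [h1, h2, h3]; nlinarith
    rw [mem_closedBall, dist_eq_norm]
    have h5 := Real.sqrt_le_sqrt key
    rwa [Real.sqrt_sq (norm_nonneg _), Real.sqrt_sq hs0] at h5
  -- measure computation
  set U := volume (ball (0:EuclideanSpace ℝ (Fin n)) 1) with hU
  have hU0 : U ≠ 0 := (measure_ball_pos _ _ one_pos).ne'
  have hUt : U ≠ ⊤ := measure_ball_lt_top.ne
  have hVol : ∀ (c : EuclideanSpace ℝ (Fin n)) (r : ℝ), 0 ≤ r →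
      volume (closedBall c r) = ENNReal.ofReal (r ^ n) * U := by
    intro c r hr
    rw [Measure.addHaar_closedBall volume c hr, finrank_euclideanSpace_fin]
  set V := volume (closedBall (0:EuclideanSpace ℝ (Fin n)) rX) with hV
  have hVeq : V = ENNReal.ofReal (rX ^ n) * U := hVol _ _ hrX.le
  set C : ℝ≥0∞ := ENNReal.ofReal AX / V with hC
  have step1 : (volume.withDensity pX) S ≤ C * volume (S ∩ closedBall (0:EuclideanSpace ℝ (Fin n)) rX) := by
    rw [withDensity_apply _ hScont]
    calc ∫⁻ x in S, pX x ≤ ∫⁻ x in S, (closedBall (0:EuclideanSpace ℝ (Fin n)) rX).indicator (fun _ => C) x := by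
          apply lintegral_mono
          intro x
          by_cases hx : x ∈ closedBall (0:EuclideanSpace ℝ (Fin n)) rX
          · rw [Set.indicator_of_mem hx]; exact hboundX x
          · rw [Set.indicator_of_notMem hx, hsuppX x hx]
      _ = ∫⁻ x in closedBall (0:EuclideanSpace ℝ (Fin n)) rX ∩ S, C := by
          rw [setLIntegral_indicator measurableSet_closedBall]
      _ = C * volume (S ∩ closedBall (0:EuclideanSpace ℝ (Fin n)) rX) := by
          rw [setLIntegral_const, Set.inter_comm, mul_comm]
  have step2 : volume (S ∩ closedBall (0:EuclideanSpace ℝ (Fin n)) rX) ≤ ENNReal.ofReal (s ^ n) * U :=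
    le_trans (measure_mono hcap) (le_of_eq (hVol _ _ hs0))
  -- arithmetic
  have hsn : s = rX * Real.sqrt (1 - θ ^ 2 / rX ^ 2) := by
    rw [hs, ← Real.sqrt_sq hrX.le, ← Real.sqrt_mul (by positivity)]
    · congr 1; field_simp; rw [Real.sq_sqrt (sq_nonneg rX)]
  calc (volume.withDensity pX) S ≤ C * (ENNReal.ofReal (s ^ n) * U) :=
        le_trans step1 (mul_le_mul_right step2 _)
    _ ≤ ENNReal.ofReal (AX * Real.sqrt (1 - θ ^ 2 / rX ^ 2) ^ n) := by
        rw [hC, hVeq]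
        have hsplit : ENNReal.ofReal (s ^ n) =
            ENNReal.ofReal (Real.sqrt (1 - θ ^ 2 / rX ^ 2) ^ n) * ENNReal.ofReal (rX ^ n) := by
          rw [← ENNReal.ofReal_mul (by positivity), hsn, mul_pow, mul_comm]
        rw [hsplit]
        rw [ENNReal.ofReal_mul hAX.le]
        rw [ENNReal.div_eq_inv_mul]
        calc (ENNReal.ofReal (rX ^ n) * U)⁻¹ * ENNReal.ofReal AX *
              (ENNReal.ofReal (Real.sqrt (1 - θ ^ 2 / rX ^ 2) ^ n) * ENNReal.ofReal (rX ^ n) * U)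
            = (ENNReal.ofReal AX * ENNReal.ofReal (Real.sqrt (1 - θ ^ 2 / rX ^ 2) ^ n)) *
              ((ENNReal.ofReal (rX ^ n) * U)⁻¹ * (ENNReal.ofReal (rX ^ n) * U)) := by ring
          _ ≤ (ENNReal.ofReal AX * ENNReal.ofReal (Real.sqrt (1 - θ ^ 2 / rX ^ 2) ^ n)) * 1 := by
              apply mul_le_mul_right
              exact ENNReal.inv_mul_le_one _
          _ = _ := by rw [mul_one]

theorem few_shot_false_positive (n k : ℕ) (hk : 0 < k)
    (cY : EuclideanSpace ℝ (Fin n)) (rY AY rX AX : ℝ)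
    (hrY : 0 < rY) (hAY : 0 < AY) (hrX : 0 < rX) (hAX : 0 < AX)
    (pY : EuclideanSpace ℝ (Fin n) → ℝ≥0∞)
    (μY : Measure (EuclideanSpace ℝ (Fin n)))
    (hμY : μY = volume.withDensity pY) [IsProbabilityMeasure μY]
    (hsuppY : ∀ x, x ∉ Metric.closedBall cY rY → pY x = 0)
    (hboundY : ∀ x, pY x ≤ ENNReal.ofReal AY / volume (Metric.closedBall cY rY))
    (pX : EuclideanSpace ℝ (Fin n) → ℝ≥0∞)
    (ν : Measure (EuclideanSpace ℝ (Fin n)))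
    (hν : ν = volume.withDensity pX) [IsProbabilityMeasure ν]
    (hsuppX : ∀ x, x ∉ Metric.closedBall (0 : EuclideanSpace ℝ (Fin n)) rX → pX x = 0)
    (hboundX : ∀ x, pX x ≤ ENNReal.ofReal AX /
        volume (Metric.closedBall (0 : EuclideanSpace ℝ (Fin n)) rX))
    (θ : ℝ) (hθ : θ ∈ Set.Ioo 0 rX) :
    ((Measure.pi (fun _ : Fin k => μY)).prod ν)[{q : (Fin k → EuclideanSpace ℝ (Fin n)) × EuclideanSpace ℝ (Fin n) |
          (1 / (k : ℝ)) * ∑ i, ⟪q.1 i, q.2⟫ ≥ θ * ‖(1 / (k : ℝ)) • ∑ i, q.1 i‖}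
       | {q : (Fin k → EuclideanSpace ℝ (Fin n)) × EuclideanSpace ℝ (Fin n) |
          (1 / (k : ℝ)) • ∑ i, q.1 i ≠ 0}]
      ≤ ENNReal.ofReal (AX * Real.sqrt (1 - θ ^ 2 / rX ^ 2) ^ n) := by
  obtain ⟨hθ0, hθr⟩ := hθ
  set μ : Measure (Fin k → (EuclideanSpace ℝ (Fin n))) := Measure.pi (fun _ => μY) with hμ
  set bound := ENNReal.ofReal (AX * Real.sqrt (1 - θ ^ 2 / rX ^ 2) ^ n) with hbound
  set B : Set ((Fin k → (EuclideanSpace ℝ (Fin n))) × (EuclideanSpace ℝ (Fin n))) := {q | (1 / (k : ℝ)) * ∑ i, ⟪q.1 i, q.2⟫ ≥ θ * ‖(1 / (k : ℝ)) • ∑ i, q.1 i‖} with hB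
  set A : Set ((Fin k → (EuclideanSpace ℝ (Fin n))) × (EuclideanSpace ℝ (Fin n))) := {q | (1 / (k : ℝ)) • ∑ i, q.1 i ≠ 0} with hA
  set A' : Set (Fin k → (EuclideanSpace ℝ (Fin n))) := {ω | (1 / (k : ℝ)) • ∑ i, ω i ≠ 0} with hA'
  have hbarcont : Continuous (fun ω : Fin k → (EuclideanSpace ℝ (Fin n)) => (1 / (k : ℝ)) • ∑ i, ω i) := by
    exact (continuous_finset_sum _ (fun i _ => continuous_apply (A := fun _ : Fin k => EuclideanSpace ℝ (Fin n)) i)).const_smul (1 / (k : ℝ))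
  have hA'meas : MeasurableSet A' :=
    (isOpen_compl_singleton.preimage hbarcont).measurableSet
  have hAmeas : MeasurableSet A :=
    (isOpen_compl_singleton.preimage (hbarcont.comp continuous_fst)).measurableSet
  have hBmeas : MeasurableSet B := by
    apply measurableSet_le
    · exact (continuous_const.mul ((hbarcont.comp continuous_fst).norm)).measurable
    · apply Continuous.measurable
      apply Continuous.mul continuous_const
      exact continuous_finset_sum _ (fun i _ =>
        (((continuous_apply i).comp continuous_fst).inner continuous_snd))
  have hABmeas : MeasurableSet (A ∩ B) := hAmeas.inter hBmeas
  -- pointwise slice bound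
  have hslice : ∀ ω : Fin k → (EuclideanSpace ℝ (Fin n)), ν (Prod.mk ω ⁻¹' (A ∩ B)) ≤
      A'.indicator (fun _ => bound) ω := by
    intro ω
    by_cases hω : ω ∈ A'
    · rw [Set.indicator_of_mem hω]
      set v : (EuclideanSpace ℝ (Fin n)) := (1 / (k : ℝ)) • ∑ i, ω i with hv
      have hsub : Prod.mk ω ⁻¹' (A ∩ B) ⊆ {x | θ * ‖v‖ ≤ ⟪v, x⟫} := by
        intro x hx
        have hxB : θ * ‖v‖ ≤ (1 / (k : ℝ)) * ∑ i, ⟪ω i, x⟫ := hx.2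
        have : ⟪v, x⟫ = (1 / (k : ℝ)) * ∑ i, ⟪ω i, x⟫ := by
          rw [hv, real_inner_smul_left, sum_inner]
        show θ * ‖v‖ ≤ ⟪v, x⟫
        rw [this]; exact hxB
      calc ν (Prod.mk ω ⁻¹' (A ∩ B)) ≤ ν {x | θ * ‖v‖ ≤ ⟪v, x⟫} := measure_mono hsub
        _ ≤ bound := by
            rw [hν]
            exact slice_bound n rX AX θ hrX hAX hθ0 hθr pX hsuppX hboundX v hω
    · rw [Set.indicator_of_notMem hω]
      have : Prod.mk ω ⁻¹' (A ∩ B) = ∅ := by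
        ext x
        simp only [Set.mem_preimage, Set.mem_inter_iff, Set.mem_empty_iff_false, iff_false]
        intro hx
        exact hω hx.1
      rw [this, measure_empty]
  -- product measure of A
  have hAprod : A = A' ×ˢ (Set.univ : Set (EuclideanSpace ℝ (Fin n))) := by
    ext q; simp [hA, hA', Set.mem_prod]
  have hμA : (μ.prod ν) A = μ A' := by
    rw [hAprod, Measure.prod_prod, measure_univ, mul_one]
  -- key bound
  have hkey : (μ.prod ν) (A ∩ B) ≤ bound * (μ.prod ν) A := by
    rw [Measure.prod_apply hABmeas, hμA]
    calc ∫⁻ ω, ν (Prod.mk ω ⁻¹' (A ∩ B)) ∂μ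
        ≤ ∫⁻ ω, A'.indicator (fun _ => bound) ω ∂μ := lintegral_mono hslice
      _ = bound * μ A' := by
          rw [lintegral_indicator hA'meas, setLIntegral_const]
  rw [ProbabilityTheory.cond_apply hAmeas]
  calc ((μ.prod ν) A)⁻¹ * (μ.prod ν) (A ∩ B)
      ≤ ((μ.prod ν) A)⁻¹ * (bound * (μ.prod ν) A) := mul_le_mul_right hkey _
    _ = bound * (((μ.prod ν) A)⁻¹ * (μ.prod ν) A) := by ring
    _ ≤ bound * 1 := mul_le_mul_right (ENNReal.inv_mul_le_one _) _
    _ = bound := mul_one _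
end

section
/- Let Y be a random vector in ℝⁿ supported in B(c_Y, r_Y) with density ≤ A_Y / V_n(B(c_Y, r_Y)), let u ∈ ℝⁿ be a unit vector, and let t ∈ ℝ satisfy ⟨u, c_Y⟩ − t ≥ d for some d ∈ (0, r_Y). Then P(⟨u, Y⟩ ≤ t) ≤ A_Y (1 − d²/r_Y²)^{n/2}. -/
open MeasureTheory
open scoped RealInnerProductSpace ENNReal

theorem new_class_detection_bound (n : ℕ) (cY : EuclideanSpace ℝ (Fin n))
    (rY AY : ℝ) (hr : 0 < rY) (hA : 0 < AY)
    (p : EuclideanSpace ℝ (Fin n) → ℝ≥0∞)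
    (μ : Measure (EuclideanSpace ℝ (Fin n)))
    (hμ : μ = volume.withDensity p) [IsProbabilityMeasure μ]
    (hsupp : ∀ x, x ∉ Metric.closedBall cY rY → p x = 0)
    (hbound : ∀ x, p x ≤ ENNReal.ofReal AY / volume (Metric.closedBall cY rY))
    (u : EuclideanSpace ℝ (Fin n)) (hu : ‖u‖ = 1)
    (t d : ℝ) (hd : d ∈ Set.Ioo 0 rY) (hsep : ⟪u, cY⟫ - t ≥ d) :
    μ {y | ⟪u, y⟫ ≤ t}
      ≤ ENNReal.ofReal (AY * Real.sqrt (1 - d ^ 2 / rY ^ 2) ^ n) := by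
  obtain ⟨hd0, hdr⟩ := hd
  set B := Metric.closedBall cY rY with hB
  set S : Set (EuclideanSpace ℝ (Fin n)) := {y | ⟪u, y⟫ ≤ t} with hS
  set ρ := Real.sqrt (rY ^ 2 - d ^ 2) with hρ
  have hρ0 : 0 ≤ ρ := Real.sqrt_nonneg _
  -- geometric containment
  have hsub : S ∩ B ⊆ Metric.closedBall (cY - d • u) ρ := by
    rintro y ⟨hy1, hy2⟩
    simp only [hS, Set.mem_setOf_eq] at hy1
    simp only [hB, Metric.mem_closedBall, dist_eq_norm] at hy2 ⊢
    have h1 : y - (cY - d • u) = (y - cY) + d • u := by abel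
    have h2 : ⟪y - cY, d • u⟫ = d * (⟪u, y⟫ - ⟪u, cY⟫) := by
      rw [real_inner_smul_right, real_inner_comm, inner_sub_right]
    have h3 : ⟪u, y⟫ - ⟪u, cY⟫ ≤ -d := by linarith
    have h4 : ‖y - cY‖ ^ 2 ≤ rY ^ 2 := by nlinarith [norm_nonneg (y - cY)]
    have h5 : ‖d • u‖ ^ 2 = d ^ 2 := by
      rw [norm_smul, Real.norm_eq_abs, hu, mul_one, sq_abs]
    have key : ‖y - (cY - d • u)‖ ^ 2 ≤ rY ^ 2 - d ^ 2 := by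
      rw [h1, norm_add_sq_real]
      nlinarith
    have := Real.sqrt_le_sqrt key
    rwa [Real.sqrt_sq (norm_nonneg _)] at this
  -- measurability
  have hSm : MeasurableSet S := by
    have : Continuous fun y : EuclideanSpace ℝ (Fin n) => ⟪u, y⟫ := continuous_const.inner continuous_id
    exact (isClosed_le this continuous_const).measurableSet
  have hBm : MeasurableSet B := Metric.isClosed_closedBall.measurableSet
  -- measure computations
  have hfr : Module.finrank ℝ (EuclideanSpace ℝ (Fin n)) = n := finrank_euclideanSpace_fin
  have hvolB : volume B = ENNReal.ofReal (rY ^ n) * volume (Metric.ball (0 : EuclideanSpace ℝ (Fin n)) 1) := by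
    rw [hB, Measure.addHaar_closedBall volume cY hr.le, hfr]
  set V := volume (Metric.ball (0 : EuclideanSpace ℝ (Fin n)) 1) with hV
  have hV0 : V ≠ 0 := (Metric.measure_ball_pos volume (0 : EuclideanSpace ℝ (Fin n)) one_pos).ne'
  have hVt : V ≠ ⊤ := measure_ball_lt_top.ne
  set M := ENNReal.ofReal AY / volume B with hM
  -- split μ S
  have hzero : μ (S \ B) = 0 := by
    rw [hμ, withDensity_apply _ (hSm.diff hBm)]
    rw [setLIntegral_congr_fun (hSm.diff hBm)
      (show Set.EqOn p (fun _ => 0) (S \ B) from fun y hy => hsupp y hy.2)]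
    simp
  have hμS : μ S ≤ μ (S ∩ B) := by
    calc μ S ≤ μ ((S ∩ B) ∪ (S \ B)) := measure_mono (by intro y hy; by_cases h : y ∈ B
                                                         · exact Or.inl ⟨hy, h⟩
                                                         · exact Or.inr ⟨hy, h⟩)
    _ ≤ μ (S ∩ B) + μ (S \ B) := measure_union_le _ _
    _ = μ (S ∩ B) := by rw [hzero, add_zero]
  have hcap : μ (S ∩ B) ≤ M * volume (S ∩ B) := by
    rw [hμ, withDensity_apply _ (hSm.inter hBm)]
    calc ∫⁻ y in S ∩ B, p y ∂volume ≤ ∫⁻ _ in S ∩ B, M := lintegral_mono fun y => hbound y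
    _ = M * volume (S ∩ B) := by rw [setLIntegral_const, mul_comm]
  have hvolcap : volume (S ∩ B) ≤ ENNReal.ofReal (ρ ^ n) * V := by
    calc volume (S ∩ B) ≤ volume (Metric.closedBall (cY - d • u) ρ) := measure_mono hsub
    _ = ENNReal.ofReal (ρ ^ n) * V := by
        rw [Measure.addHaar_closedBall volume _ hρ0, hfr]
  -- final computation
  have hρr : ρ = Real.sqrt (1 - d ^ 2 / rY ^ 2) * rY := by
    rw [hρ]
    have : rY ^ 2 - d ^ 2 = (1 - d ^ 2 / rY ^ 2) * rY ^ 2 := by field_simp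
    rw [this, Real.sqrt_mul (by nlinarith [sq_nonneg d]) , Real.sqrt_sq hr.le]
  have hsq0 : 0 ≤ Real.sqrt (1 - d ^ 2 / rY ^ 2) := Real.sqrt_nonneg _
  have hρpow : ρ ^ n = Real.sqrt (1 - d ^ 2 / rY ^ 2) ^ n * rY ^ n := by
    rw [hρr, mul_pow]
  have hrn0 : (0:ℝ) < rY ^ n := pow_pos hr n
  have hfinal : M * (ENNReal.ofReal (ρ ^ n) * V)
      = ENNReal.ofReal (AY * Real.sqrt (1 - d ^ 2 / rY ^ 2) ^ n) := by
    rw [hM, hvolB, hρpow, ENNReal.ofReal_mul (by positivity),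
      ENNReal.div_eq_inv_mul]
    rw [ENNReal.ofReal_mul hA.le]
    have hne0 : ENNReal.ofReal (rY ^ n) * V ≠ 0 := by
      simp [hV0, ENNReal.ofReal_eq_zero, not_le, hrn0]
    have hnet : ENNReal.ofReal (rY ^ n) * V ≠ ⊤ := by
      exact ENNReal.mul_ne_top ENNReal.ofReal_ne_top hVt
    calc (ENNReal.ofReal (rY ^ n) * V)⁻¹ * ENNReal.ofReal AY *
          (ENNReal.ofReal (Real.sqrt (1 - d ^ 2 / rY ^ 2) ^ n) * ENNReal.ofReal (rY ^ n) * V)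
        = (ENNReal.ofReal (rY ^ n) * V)⁻¹ * (ENNReal.ofReal (rY ^ n) * V) *
          (ENNReal.ofReal AY * ENNReal.ofReal (Real.sqrt (1 - d ^ 2 / rY ^ 2) ^ n)) := by ring
    _ = ENNReal.ofReal AY * ENNReal.ofReal (Real.sqrt (1 - d ^ 2 / rY ^ 2) ^ n) := by
        rw [ENNReal.inv_mul_cancel hne0 hnet, one_mul]
  calc μ S ≤ μ (S ∩ B) := hμS
  _ ≤ M * volume (S ∩ B) := hcap
  _ ≤ M * (ENNReal.ofReal (ρ ^ n) * V) := mul_le_mul_right hvolcap _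
  _ = _ := hfinal
end
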